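/- Let S be a finite nonempty set of states with a designated neutral state ν and an injection ι : Bool → S. Then for all sufficiently large k (namely whenever (2k+1)·⌈log₂ |S|⌉ < 2^k) there is no non-uniform cellular automaton over S that computes the indexing predicate T_k : B^k × B^(2^(2k)) × B^k → Bool, T_k(x,y,z) = y(x,z), as soon as possible: there are no functions g : ℕ × ℤ × (S × S × S) → S and ρ : S → Bool such that, defining s(0,i) = ι(w_i) for 1 ≤ i ≤ N = 2k + 2^(2k) (w = xyz the concatenated input), s(0,i) = ν otherwise, and s(t+1,i) = g(t, i, (s(t,i−1), s(t,i), s(t,i+1))), one has T_k(x,y,z) = ρ(s(k + 2^(2k−1), k + 2^(2k−1))) for all inputs. -/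

import Mathlib

/-- `BS k` is the set of binary strings of length `k`. -/
abbrev BS (k : ℕ) := Fin k → Bool

/-- Run of a non-uniform cellular automaton: the state of cell `i` at time `t + 1`
is the vertex-dependent function `g` applied to the states of cells
`i - 1`, `i`, `i + 1` at time `t`. -/
def caRun {S : Type*} (g : ℕ × ℤ × (S × S × S) → S) (init : ℤ → S) : ℕ → ℤ → S
  | 0 => init
  | t + 1 => fun i =>
      g (t, i, (caRun g init t (i - 1), caRun g init t i, caRun g init t (i + 1)))

/-- Initial configuration: the `N = k + f + k` bits of the concatenated input
`w = xyz` are placed in cells `1, …, N`; every other cell is in the neutral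
state `ν`. -/
def caInit {S : Type*} (ν : S) (ι : Bool → S) {k f : ℕ}
    (x : BS k) (y : BS f) (z : BS k) : ℤ → S := fun i =>
  if h : 1 ≤ i ∧ i ≤ (k + f + k : ℕ) then
    ι (Fin.append (Fin.append x y) z ⟨(i - 1).toNat, by omega⟩)
  else ν

lemma caRun_cone {S : Type*} (g : ℕ × ℤ × (S × S × S) → S) (init1 init2 : ℤ → S) :
    ∀ (d t : ℕ) (i : ℤ),
      (∀ j : ℤ, i - d ≤ j → j ≤ i + d → caRun g init1 t j = caRun g init2 t j) →
      caRun g init1 (t + d) i = caRun g init2 (t + d) i := by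
  intro d
  induction d with
  | zero => intro t i h; simpa using h i (by omega) (by omega)
  | succ d ih =>
    intro t i h
    have ht : t + (d + 1) = (t + 1) + d := by omega
    rw [ht]
    apply ih (t + 1) i
    intro j hj1 hj2
    have e1 := h (j - 1) (by push_cast at hj1 ⊢; omega) (by push_cast at hj2 ⊢; omega)
    have e2 := h j (by push_cast at hj1 ⊢; omega) (by push_cast at hj2 ⊢; omega)
    have e3 := h (j + 1) (by push_cast at hj1 ⊢; omega) (by push_cast at hj2 ⊢; omega)
    simp only [caRun, e1, e2, e3]

lemma caRun_cone0 {S : Type*} (g : ℕ × ℤ × (S × S × S) → S) (init1 init2 : ℤ → S)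
    (d : ℕ) (i : ℤ) (h : ∀ j : ℤ, i - d ≤ j → j ≤ i + d → init1 j = init2 j) :
    caRun g init1 d i = caRun g init2 d i := by
  simpa using caRun_cone g init1 init2 d 0 i h

lemma append3_left {k f : ℕ} (x : BS k) (y : BS f) (z : BS k) (i : ℕ)
    (h1 : i < k + f + k) (h2 : i < k + f) :
    Fin.append (Fin.append x y) z ⟨i, h1⟩ = Fin.append x y ⟨i, h2⟩ := by
  have : (⟨i, h1⟩ : Fin (k + f + k)) = Fin.castAdd k ⟨i, h2⟩ := rfl
  rw [this, Fin.append_left]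

lemma append3_right {k f : ℕ} (x : BS k) (y : BS f) (z : BS k) (i : ℕ)
    (h1 : i < k + f + k) (h2 : k + f ≤ i) :
    Fin.append (Fin.append x y) z ⟨i, h1⟩ = z ⟨i - (k + f), by omega⟩ := by
  have : (⟨i, h1⟩ : Fin (k + f + k)) = Fin.natAdd (k + f) ⟨i - (k + f), by omega⟩ := by
    apply Fin.ext; simp [Fin.natAdd]; omega
  rw [this, Fin.append_right]

lemma append2_right {k f : ℕ} (x : BS k) (y : BS f) (i : ℕ)
    (h1 : i < k + f) (h2 : k ≤ i) :
    Fin.append x y ⟨i, h1⟩ = y ⟨i - k, by omega⟩ := by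
  have : (⟨i, h1⟩ : Fin (k + f)) = Fin.natAdd k ⟨i - k, by omega⟩ := by
    apply Fin.ext; simp [Fin.natAdd]; omega
  rw [this, Fin.append_right]

lemma caInit_indep_z {S : Type*} (ν : S) (ι : Bool → S) {k f : ℕ}
    (x : BS k) (y : BS f) (z z' : BS k) (j : ℤ) (hj : j ≤ (k + f : ℕ)) :
    caInit ν ι x y z j = caInit ν ι x y z' j := by
  unfold caInit
  by_cases h : 1 ≤ j ∧ j ≤ (k + f + k : ℕ)
  · rw [dif_pos h, dif_pos h]
    have hlt : (j - 1).toNat < k + f := by omega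
    rw [append3_left x y z _ _ hlt, append3_left x y z' _ _ hlt]
  · rw [dif_neg h, dif_neg h]

lemma caInit_indep_x {S : Type*} (ν : S) (ι : Bool → S) {k f : ℕ}
    (x x' : BS k) (y : BS f) (z : BS k) (j : ℤ) (hj : (k : ℤ) + 1 ≤ j) :
    caInit ν ι x y z j = caInit ν ι x' y z j := by
  unfold caInit
  by_cases h : 1 ≤ j ∧ j ≤ (k + f + k : ℕ)
  · rw [dif_pos h, dif_pos h]
    have hk : k ≤ (j - 1).toNat := by omega
    by_cases hlt : (j - 1).toNat < k + f
    · rw [append3_left x y z _ _ hlt, append3_left x' y z _ _ hlt,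
        append2_right x y _ _ hk, append2_right x' y _ _ hk]
    · rw [append3_right x y z _ _ (by omega), append3_right x' y z _ _ (by omega)]
  · rw [dif_neg h, dif_neg h]

/-- Whenever `(2k+1)·⌈log₂ |S|⌉ < 2^k`, no non-uniform cellular automaton over `S`
computes the indexing predicate `T_k(x,y,z) = y(x,z)` "as soon as possible", i.e.
with the output read off the middle cell `k + 2^(2k-1)` at time `k + 2^(2k-1)`. -/
theorem ca_asap_indexing_impossible {S : Type*} [Fintype S] [Nonempty S]
    (ν : S) (ι : Bool → S) (hι : Function.Injective ι)
    (k : ℕ) (hk : (2 * k + 1) * Nat.clog 2 (Fintype.card S) < 2 ^ k)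
    (e : (BS k × BS k) ≃ Fin (2 ^ (2 * k))) :
    ¬ ∃ (g : ℕ × ℤ × (S × S × S) → S) (ρ : S → Bool),
        ∀ (x : BS k) (y : BS (2 ^ (2 * k))) (z : BS k),
          y (e (x, z)) =
            ρ (caRun g (caInit ν ι x y z)
                (k + 2 ^ (2 * k - 1)) ((k + 2 ^ (2 * k - 1) : ℕ) : ℤ)) := by
  have hS2 : 2 ≤ Fintype.card S := by
    have := Fintype.card_le_of_injective ι hι
    simpa using this
  rcases Nat.eq_zero_or_pos k with hk0 | hkpos
  · -- k = 0 : hypothesis already contradictory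
    intro _
    subst hk0
    have hpos : 0 < Nat.clog 2 (Fintype.card S) :=
      Nat.clog_pos (by norm_num) (by omega)
    simp at hk
    omega
  rintro ⟨g, ρ, hg⟩
  set F : ℕ := 2 ^ (2 * k - 1) with hFdef
  have hf : (2 : ℕ) ^ (2 * k) = 2 * F := by
    rw [hFdef, ← pow_succ']
    congr 1
    omega
  -- runs at time F on cells ≤ k + F do not depend on z
  have hleftF : ∀ (x : BS k) (y : BS (2 ^ (2 * k))) (z z' : BS k) (c : ℤ),
      c ≤ (k : ℤ) + F →
      caRun g (caInit ν ι x y z) F c = caRun g (caInit ν ι x y z') F c := by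
    intro x y z z' c hc
    apply caRun_cone0
    intro j hj1 hj2
    apply caInit_indep_z
    rw [hf]
    push_cast
    omega
  -- runs at time F on cells ≥ k + F + 1 do not depend on x
  have hrightF : ∀ (x x' : BS k) (y : BS (2 ^ (2 * k))) (z : BS k) (c : ℤ),
      (k : ℤ) + F + 1 ≤ c →
      caRun g (caInit ν ι x y z) F c = caRun g (caInit ν ι x' y z) F c := by
    intro x x' y z c hc
    apply caRun_cone0
    intro j hj1 hj2
    apply caInit_indep_x
    omega
  set x0 : BS k := fun _ => false with hx0
  set z0 : BS k := fun _ => false with hz0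
  have key : Function.Injective (fun y : BS (2 ^ (2 * k)) =>
      ((fun x : BS k => fun j : Fin (k + 1) =>
          caRun g (caInit ν ι x y z0) F ((F + j.1 : ℕ) : ℤ)),
       (fun z : BS k => fun j : Fin k =>
          caRun g (caInit ν ι x0 y z) F ((k + F + 1 + j.1 : ℕ) : ℤ)))) := by
    intro y y' hyy'
    simp only [Prod.mk.injEq] at hyy'
    obtain ⟨hA, hB⟩ := hyy'
    funext q
    set p := e.symm q with hp
    have hq : e (p.1, p.2) = q := by rw [Prod.mk.eta]; exact e.apply_symm_apply q
    have h1 := hg p.1 y p.2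
    have h2 := hg p.1 y' p.2
    rw [hq] at h1 h2
    rw [h1, h2]
    congr 1
    have hT : k + F = F + k := by omega
    rw [hT]
    apply caRun_cone g _ _ k F
    intro j hj1 hj2
    by_cases hc : j ≤ (k : ℤ) + F
    · have h0 : 0 ≤ j - (F : ℤ) := by push_cast at hj1; omega
      have hmid := congrFun (congrFun hA p.1)
        ⟨(j - (F : ℤ)).toNat, by push_cast at hj1; omega⟩
      have hcell : ((F + (j - (F : ℤ)).toNat : ℕ) : ℤ) = j := by
        push_cast
        rw [Int.toNat_of_nonneg h0]
        omega
      rw [hcell] at hmid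
      calc caRun g (caInit ν ι p.1 y p.2) F j
          = caRun g (caInit ν ι p.1 y z0) F j := hleftF _ _ _ _ _ hc
        _ = caRun g (caInit ν ι p.1 y' z0) F j := hmid
        _ = caRun g (caInit ν ι p.1 y' p.2) F j := (hleftF _ _ _ _ _ hc).symm
    · push_neg at hc
      have h0 : 0 ≤ j - ((k : ℤ) + F + 1) := by omega
      have hmid := congrFun (congrFun hB p.2)
        ⟨(j - ((k : ℤ) + F + 1)).toNat, by push_cast at hj2; omega⟩
      have hcell : ((k + F + 1 + (j - ((k : ℤ) + F + 1)).toNat : ℕ) : ℤ) = j := by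
        push_cast
        rw [Int.toNat_of_nonneg h0]
        omega
      rw [hcell] at hmid
      calc caRun g (caInit ν ι p.1 y p.2) F j
          = caRun g (caInit ν ι x0 y p.2) F j := hrightF _ _ _ _ _ (by omega)
        _ = caRun g (caInit ν ι x0 y' p.2) F j := hmid
        _ = caRun g (caInit ν ι p.1 y' p.2) F j := (hrightF _ _ _ _ _ (by omega)).symm
  have hcard := Fintype.card_le_of_injective _ key
  have c1 : Fintype.card (BS (2 ^ (2 * k))) = 2 ^ (2 ^ (2 * k)) := by
    simp [Fintype.card_fun]
  have c2 : Fintype.card ((BS k → Fin (k + 1) → S) × (BS k → Fin k → S)) =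
      ((Fintype.card S ^ (k + 1)) ^ (2 ^ k)) * ((Fintype.card S ^ k) ^ (2 ^ k)) := by
    simp [Fintype.card_fun]
  rw [c1, c2] at hcard
  set s := Fintype.card S with hs
  set c := Nat.clog 2 s with hc
  have hsc : s ≤ 2 ^ c := Nat.le_pow_clog (by norm_num) s
  have step1 : ((s ^ (k + 1)) ^ (2 ^ k)) * ((s ^ k) ^ (2 ^ k)) ≤
      2 ^ ((2 * k + 1) * c * 2 ^ k) := by
    calc ((s ^ (k + 1)) ^ (2 ^ k)) * ((s ^ k) ^ (2 ^ k))
        ≤ (((2 ^ c) ^ (k + 1)) ^ (2 ^ k)) * (((2 ^ c) ^ k) ^ (2 ^ k)) := by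
          gcongr
      _ = 2 ^ ((2 * k + 1) * c * 2 ^ k) := by
          rw [← pow_mul, ← pow_mul, ← pow_mul, ← pow_mul, ← pow_add]
          congr 1
          ring
  have step2 : (2 : ℕ) ^ ((2 * k + 1) * c * 2 ^ k) < 2 ^ (2 ^ (2 * k)) := by
    apply Nat.pow_lt_pow_right (by norm_num)
    calc (2 * k + 1) * c * 2 ^ k < 2 ^ k * 2 ^ k :=
          mul_lt_mul_of_pos_right hk (Nat.pow_pos (by norm_num))
      _ = 2 ^ (2 * k) := by rw [← pow_add]; congr 1; omega
  omega
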